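/- Let Φ = {φ_n}_{n=1}^N ⊆ ℂ^M and suppose the map A : ℂ^M/𝕋 → ℝ^N given by (A(x))(n) = |⟨x, φ_n⟩|² is injective modulo the unit circle. Then the map B : ℂ^M/{±1} → ℂ^N defined by (B(x))(n) = ⟨x, φ_n⟩² is injective modulo sign, i.e., ⟨x,φ_n⟩² = ⟨y,φ_n⟩² for all n implies y = x or y = -x. -/

import Mathlib

theorem stmt_6 (M N : ℕ) (Φ : Fin N → EuclideanSpace ℂ (Fin M))
    (hinj : ∀ x y : EuclideanSpace ℂ (Fin M),
        (∀ n, ‖(inner ℂ x (Φ n) : ℂ)‖ ^ 2 = ‖(inner ℂ y (Φ n) : ℂ)‖ ^ 2) →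
        ∃ c : ℂ, ‖c‖ = 1 ∧ y = c • x) :
    ∀ x y : EuclideanSpace ℂ (Fin M),
      (∀ n, (inner ℂ x (Φ n) : ℂ) ^ 2 = (inner ℂ y (Φ n) : ℂ) ^ 2) → y = x ∨ y = -x := by
  intro x y h
  have hnorm : ∀ n, ‖(inner ℂ x (Φ n) : ℂ)‖ ^ 2 = ‖(inner ℂ y (Φ n) : ℂ)‖ ^ 2 := by
    intro n
    have := congrArg norm (h n)
    simpa [norm_pow] using this
  obtain ⟨c, hc, hyx⟩ := hinj x y hnorm
  by_cases hzero : ∀ n, (inner ℂ x (Φ n) : ℂ) = 0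
  · have h0 : ∀ n, ‖(inner ℂ x (Φ n) : ℂ)‖ ^ 2
        = ‖(inner ℂ (0 : EuclideanSpace ℂ (Fin M)) (Φ n) : ℂ)‖ ^ 2 := by
      intro n; simp [hzero n]
    obtain ⟨c', hc', hx0⟩ := hinj x 0 h0
    have hc'ne : c' ≠ 0 := by
      intro h'; rw [h'] at hc'; simp at hc'
    have hx : x = 0 := by
      have := hx0.symm
      rcases smul_eq_zero.mp this with h' | h'
      · exact absurd h' hc'ne
      · exact h'
    left
    rw [hyx, hx, smul_zero]
  · push_neg at hzero
    obtain ⟨n, hn⟩ := hzero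
    have h1 : (inner ℂ y (Φ n) : ℂ) = starRingEnd ℂ c * inner ℂ x (Φ n) := by
      rw [hyx]; exact inner_smul_left x (Φ n) c
    have h2 := h n
    rw [h1, mul_pow] at h2
    have key : (starRingEnd ℂ c) ^ 2 = 1 := by
      have h3 : (starRingEnd ℂ c) ^ 2 * (inner ℂ x (Φ n) : ℂ) ^ 2
          = 1 * (inner ℂ x (Φ n) : ℂ) ^ 2 := by rw [one_mul]; exact h2.symm
      exact mul_right_cancel₀ (pow_ne_zero 2 hn) h3
    have key2 : c ^ 2 = 1 := by
      have := congrArg (starRingEnd ℂ) key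
      simpa using this
    have key3 : c * c = 1 := by rw [← sq]; exact key2
    rcases mul_self_eq_one_iff.mp key3 with h' | h'
    · left; rw [hyx, h', one_smul]
    · right; rw [hyx, h', neg_smul, one_smul]
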